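/- Let n ≥ 2, k ≥ 0, and let e = (1, 0, …, 0) ∈ S^{n−1}. The subspace of all harmonic homogeneous polynomials f ∈ Harm_k (in n variables over ℂ) satisfying f(u⁻¹ x) = f(x) for all x ∈ ℝ^n and all orthogonal matrices u ∈ O(n) with u e = e is exactly one-dimensional. -/

import Mathlib

set_option maxHeartbeats 1000000


open MvPolynomial
open scoped Matrix

/-- The Laplace operator `Δ = ∑ i ∂²/∂x_i²` on polynomials in `n` variables. -/
noncomputable def polyLaplacian (n : ℕ) :
    MvPolynomial (Fin n) ℂ →ₗ[ℂ] MvPolynomial (Fin n) ℂ :=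
  ∑ i : Fin n, ((pderiv i).toLinearMap ∘ₗ (pderiv i).toLinearMap)

/-- `Harm_k`: the space of harmonic homogeneous polynomials of degree `k`. -/
noncomputable def harmSubmodule (n k : ℕ) : Submodule ℂ (MvPolynomial (Fin n) ℂ) :=
  homogeneousSubmodule (Fin n) ℂ k ⊓ LinearMap.ker (polyLaplacian n)

/-- The pole `e = (1, 0, …, 0) ∈ ℝ^n`. -/
noncomputable def poleVec (n : ℕ) : Fin n → ℝ := fun i => if (i : ℕ) = 0 then 1 else 0

/-- A polynomial `f` is a zonal function with pole `e`: `f(u⁻¹ x) = f(x)` for all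
`x ∈ ℝ^n` and all orthogonal `u` with `u e = e`. -/
def IsZonal (n : ℕ) (f : MvPolynomial (Fin n) ℂ) : Prop :=
  ∀ u : Matrix.orthogonalGroup (Fin n) ℝ,
    (u : Matrix (Fin n) (Fin n) ℝ) *ᵥ poleVec n = poleVec n →
    ∀ x : Fin n → ℝ,
      eval (fun i => ((((u⁻¹ : Matrix.orthogonalGroup (Fin n) ℝ) :
          Matrix (Fin n) (Fin n) ℝ) *ᵥ x) i : ℂ)) f =
        eval (fun i => ((x i : ℝ) : ℂ)) f

section AUX

open MvPolynomial
open scoped Matrix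


lemma eval_real_zero : ∀ {N : ℕ} (g : MvPolynomial (Fin N) ℂ),
    (∀ x : Fin N → ℝ, eval (fun i => (x i : ℂ)) g = 0) → g = 0 := by
  intro N
  induction N with
  | zero =>
    intro g h
    rw [MvPolynomial.eq_C_of_isEmpty g]
    have := h (fun _ => 0)
    rw [MvPolynomial.eq_C_of_isEmpty g] at this
    simpa using this
  | succ N ih =>
    intro g h
    have key : ∀ s : Fin N → ℝ,
        Polynomial.map (eval (fun i => (s i : ℂ))) (finSuccEquiv ℂ N g) = 0 := by
      intro s
      apply Polynomial.eq_zero_of_infinite_isRoot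
      apply Set.Infinite.mono (s := (fun t : ℝ => (t : ℂ)) '' Set.univ)
      · rintro z ⟨t, -, rfl⟩
        have := h (Fin.cons t s)
        rw [show (fun i => ((Fin.cons t s : Fin (N+1) → ℝ) i : ℂ)) =
            Fin.cons (t:ℂ) (fun i => (s i : ℂ)) from funext (Fin.cases rfl fun i => rfl)] at this
        rw [MvPolynomial.eval_eq_eval_mv_eval'] at this
        exact this
      · exact Set.Infinite.image (fun a _ b _ hab => Complex.ofReal_injective hab)
          Set.infinite_univ
    have hcoeff : ∀ m : ℕ, (finSuccEquiv ℂ N g).coeff m = 0 := by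
      intro m
      apply ih
      intro s
      have := congrArg (fun p => Polynomial.coeff p m) (key s)
      simpa [Polynomial.coeff_map] using this
    have : finSuccEquiv ℂ N g = 0 := Polynomial.ext fun m => by simp [hcoeff m]
    exact (map_eq_zero_iff _ (AlgEquiv.injective _)).mp this






noncomputable def hmat {n : ℕ} (w : Fin n → ℝ) : Matrix (Fin n) (Fin n) ℝ :=
  1 - (2 / (∑ i, w i * w i)) • Matrix.vecMulVec w w

variable {n : ℕ}

lemma hmat_transpose (w : Fin n → ℝ) : (hmat w)ᵀ = hmat w := by
  unfold hmat
  rw [Matrix.transpose_sub, Matrix.transpose_one, Matrix.transpose_smul]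
  congr 1
  ext a b
  simp [Matrix.vecMulVec_apply, mul_comm]

lemma vecMulVec_mul_self (w : Fin n → ℝ) :
    Matrix.vecMulVec w w * Matrix.vecMulVec w w = (∑ i, w i * w i) • Matrix.vecMulVec w w := by
  ext a b
  simp only [Matrix.mul_apply, Matrix.vecMulVec_apply, Matrix.smul_apply, smul_eq_mul]
  rw [Finset.sum_mul]
  exact Finset.sum_congr rfl fun c _ => by ring

lemma hmat_mul_self (w : Fin n → ℝ) (hw : (∑ i, w i * w i) ≠ 0) :
    hmat w * hmat w = 1 := by
  unfold hmat
  simp only [Matrix.sub_mul, Matrix.mul_sub, Matrix.one_mul, Matrix.mul_one,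
    smul_mul_assoc, mul_smul_comm, vecMulVec_mul_self, smul_smul]
  rw [smul_sub, smul_smul]
  have h2 : (2 / (∑ i, w i * w i)) * ((2 / (∑ i, w i * w i)) * (∑ i, w i * w i))
      = (2 / (∑ i, w i * w i)) + (2 / (∑ i, w i * w i)) := by field_simp; ring
  rw [h2, add_smul]
  abel

lemma hmat_mem (w : Fin n → ℝ) (hw : (∑ i, w i * w i) ≠ 0) :
    hmat w ∈ Matrix.orthogonalGroup (Fin n) ℝ := by
  rw [Matrix.mem_orthogonalGroup_iff]
  have : star (hmat w) = hmat w := by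
    rw [Matrix.star_eq_conjTranspose]
    rw [show (hmat w)ᴴ = (hmat w)ᵀ from rfl]
    exact hmat_transpose w
  rw [hmat_transpose w]
  exact hmat_mul_self w hw

lemma hmat_mulVec (w : Fin n → ℝ) (x : Fin n → ℝ) :
    hmat w *ᵥ x = x - ((2 / (∑ i, w i * w i)) * (w ⬝ᵥ x)) • w := by
  unfold hmat
  rw [Matrix.sub_mulVec, Matrix.one_mulVec]
  congr 1
  ext a
  simp only [Pi.smul_apply, Matrix.mulVec, dotProduct, Matrix.smul_apply,
    Matrix.vecMulVec_apply, smul_eq_mul, Finset.sum_mul]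
  rw [Finset.mul_sum, Finset.sum_mul]
  exact Finset.sum_congr rfl fun c _ => by ring


noncomputable def tailNorm {n : ℕ} (x : Fin n → ℝ) : ℝ :=
  Real.sqrt (∑ i : Fin n, (if (i:ℕ) = 0 then 0 else x i) * (if (i:ℕ) = 0 then 0 else x i))

variable {n : ℕ}


lemma pick1 (hn : 2 ≤ n) (g : Fin n → ℝ) :
    ∑ i : Fin n, (if (i:ℕ) = 1 then g i else 0) = g ⟨1, by omega⟩ := by
  rw [Finset.sum_eq_single (⟨1, by omega⟩ : Fin n)]
  · simp
  · intro b _ hb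
    rw [if_neg (fun h => hb (Fin.val_injective (by simpa using h)))]
  · intro h; exact absurd (Finset.mem_univ _) h

lemma pick0 (hn : 2 ≤ n) (g : Fin n → ℝ) :
    ∑ i : Fin n, (if (i:ℕ) = 0 then g i else 0) = g ⟨0, by omega⟩ := by
  rw [Finset.sum_eq_single (⟨0, by omega⟩ : Fin n)]
  · simp
  · intro b _ hb
    rw [if_neg (fun h => hb (Fin.val_injective (by simpa using h)))]
  · intro h; exact absurd (Finset.mem_univ _) h

lemma star_hmat (w : Fin n → ℝ) : star (hmat w) = hmat w := by
  rw [Matrix.star_eq_conjTranspose]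
  rw [show (hmat w)ᴴ = (hmat w)ᵀ from rfl]
  exact hmat_transpose w

lemma inv_coe_hmat (w : Fin n → ℝ) (h : hmat w ∈ Matrix.orthogonalGroup (Fin n) ℝ) :
    (((⟨hmat w, h⟩ : Matrix.orthogonalGroup (Fin n) ℝ)⁻¹ :
      Matrix.orthogonalGroup (Fin n) ℝ) : Matrix (Fin n) (Fin n) ℝ) = hmat w := by
  rw [Matrix.UnitaryGroup.inv_val]
  exact star_hmat w

lemma sum_sq_pos_of_ne_zero {w : Fin n → ℝ} (hw : w ≠ 0) : 0 < ∑ i, w i * w i := by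
  have : ∃ j, w j ≠ 0 := by
    by_contra hc
    push_neg at hc
    exact hw (funext fun j => hc j)
  obtain ⟨j, hj⟩ := this
  exact Finset.sum_pos' (fun i _ => mul_self_nonneg _) ⟨j, Finset.mem_univ j, mul_self_pos.mpr hj⟩


lemma zonal_collapse (hn : 2 ≤ n) {f : MvPolynomial (Fin n) ℂ} (hf : IsZonal n f)
    (x : Fin n → ℝ) :
    eval (fun i => (x i : ℂ)) f =
      eval (fun i : Fin n =>
        ((if (i:ℕ) = 0 then x ⟨0, by omega⟩ else if (i:ℕ) = 1 then tailNorm x else 0 : ℝ) : ℂ)) f := by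
  have i0 : Fin n := ⟨0, by omega⟩
  set v : Fin n → ℝ := fun i : Fin n => if (i:ℕ) = 0 then 0 else x i with hv
  set ρ : ℝ := tailNorm x with hρ
  set x' : Fin n → ℝ := fun i : Fin n =>
    if (i:ℕ) = 0 then x ⟨0, by omega⟩ else if (i:ℕ) = 1 then ρ else 0 with hx'
  set w : Fin n → ℝ := fun i : Fin n => v i - (if (i:ℕ) = 1 then ρ else 0) with hw
  have hρnn : 0 ≤ ρ := Real.sqrt_nonneg _
  have hS : ∑ i, v i * v i = ρ ^ 2 := by
    rw [hρ]; unfold tailNorm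
    rw [Real.sq_sqrt (Finset.sum_nonneg fun i _ => mul_self_nonneg _)]
  by_cases hw0 : w = 0
  · have hxx' : ∀ i, x i = x' i := by
      intro i
      have hwi := congrFun hw0 i
      simp only [hw, hv, Pi.zero_apply, sub_eq_zero] at hwi
      by_cases h0 : (i:ℕ) = 0
      · have hii : i = ⟨0, by omega⟩ := Fin.val_injective (by simpa using h0)
        simp [hx', h0, hii]
      · by_cases h1 : (i:ℕ) = 1
        · simp only [h0, if_false, h1, if_true] at hwi
          simp [hx', h0, h1, ← hwi]
        · simp only [h0, if_false, h1, if_false] at hwi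
          simp [hx', h0, h1, hwi]
    exact congrArg (fun y => eval y f) (funext fun i => by rw [hxx' i])
  · have hQpos : 0 < ∑ i, w i * w i := sum_sq_pos_of_ne_zero hw0
    set u : Matrix.orthogonalGroup (Fin n) ℝ := ⟨hmat w, hmat_mem w hQpos.ne'⟩ with hu
    have hw00 : w ⟨0, by omega⟩ = 0 := by
      have : ((⟨0, by omega⟩ : Fin n) : ℕ) = 0 := rfl
      simp [hw, hv, this]
    have hpole : (u : Matrix (Fin n) (Fin n) ℝ) *ᵥ poleVec n = poleVec n := by
      show hmat w *ᵥ poleVec n = poleVec n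
      rw [hmat_mulVec]
      have hdot : w ⬝ᵥ poleVec n = 0 := by
        unfold dotProduct poleVec
        rw [Finset.sum_congr rfl (fun i _ => show w i * (if (i:ℕ) = 0 then (1:ℝ) else 0) =
            (if (i:ℕ) = 0 then w i else 0) by split <;> simp)]
        rw [pick0 hn w, hw00]
      rw [hdot]
      simp
    have key := hf u hpole x
    rw [show ((u⁻¹ : Matrix.orthogonalGroup (Fin n) ℝ) : Matrix (Fin n) (Fin n) ℝ)
      = hmat w from inv_coe_hmat w _] at key
    have hvx : ∑ i, v i * x i = ρ ^ 2 := by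
      rw [← hS]
      exact Finset.sum_congr rfl fun i _ => by
        by_cases h0 : (i:ℕ) = 0 <;> simp [hv, h0]
    have hiv1 : v ⟨1, by omega⟩ = x ⟨1, by omega⟩ := by
      have : ((⟨1, by omega⟩ : Fin n) : ℕ) = 1 := rfl
      simp [hv, this]
    have hwx : w ⬝ᵥ x = ρ ^ 2 - ρ * x ⟨1, by omega⟩ := by
      unfold dotProduct
      rw [Finset.sum_congr rfl (fun i _ => show w i * x i =
        v i * x i - (if (i:ℕ) = 1 then ρ * x i else 0) by
          by_cases h1 : (i:ℕ) = 1 <;> simp [hw, h1] <;> ring)]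
      rw [Finset.sum_sub_distrib, hvx]
      congr 1
      exact pick1 hn (fun i => ρ * x i)
    have hQ : ∑ i, w i * w i = 2 * (ρ ^ 2 - ρ * x ⟨1, by omega⟩) := by
      rw [Finset.sum_congr rfl (fun i _ => show w i * w i =
        v i * v i - (if (i:ℕ) = 1 then 2 * ρ * v i else 0)
          + (if (i:ℕ) = 1 then ρ * ρ else 0) by
          by_cases h1 : (i:ℕ) = 1 <;> simp [hw, h1] <;> ring)]
      have hA : ∑ i : Fin n, (if (i:ℕ) = 1 then 2 * ρ * v i else 0)
          = 2 * ρ * v ⟨1, by omega⟩ := pick1 hn _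
      have hB : ∑ i : Fin n, (if (i:ℕ) = 1 then ρ * ρ else 0) = ρ * ρ := pick1 hn _
      rw [Finset.sum_add_distrib, Finset.sum_sub_distrib, hS, hA, hB, hiv1]
      ring
    have hcoef : (2 / (∑ i, w i * w i)) * (w ⬝ᵥ x) = 1 := by
      rw [hwx, hQ]
      have hne : ρ ^ 2 - ρ * x ⟨1, by omega⟩ ≠ 0 := by
        intro hc
        rw [hQ, hc] at hQpos
        simp at hQpos
      field_simp
      exact div_self (by intro h; apply hne; linear_combination h)
    have hmv : hmat w *ᵥ x = x' := by
      rw [hmat_mulVec, hcoef, one_smul]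
      funext i
      show x i - w i = x' i
      by_cases h0 : (i:ℕ) = 0
      · have hii : i = ⟨0, by omega⟩ := Fin.val_injective (by simpa using h0)
        rw [hii, hw00]
        simp [hx', h0, hii]
      · by_cases h1 : (i:ℕ) = 1
        · simp [hw, hv, hx', h0, h1]
        · simp [hw, hv, hx', h0, h1]
    rw [hmv] at key
    exact key.symm

lemma zonal_reflect (hn : 2 ≤ n) {f : MvPolynomial (Fin n) ℂ} (hf : IsZonal n f)
    (x : Fin n → ℝ) :
    eval (fun i : Fin n => ((if (i:ℕ) = 1 then -x i else x i : ℝ) : ℂ)) f =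
      eval (fun i => (x i : ℂ)) f := by
  set w : Fin n → ℝ := fun i : Fin n => if (i:ℕ) = 1 then 1 else 0 with hw
  have hQ : ∑ i, w i * w i = 1 := by
    have h1 : ∑ i : Fin n, (if (i:ℕ) = 1 then (1:ℝ) else 0) = 1 := pick1 hn (fun _ => (1:ℝ))
    rw [Finset.sum_congr rfl (fun i _ => show w i * w i =
      (if (i:ℕ) = 1 then (1:ℝ) else 0) by by_cases h : (i:ℕ) = 1 <;> simp [hw, h]), h1]
  have hQne : (∑ i, w i * w i) ≠ 0 := by rw [hQ]; norm_num
  set u : Matrix.orthogonalGroup (Fin n) ℝ := ⟨hmat w, hmat_mem w hQne⟩ with hu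
  have hpole : (u : Matrix (Fin n) (Fin n) ℝ) *ᵥ poleVec n = poleVec n := by
    show hmat w *ᵥ poleVec n = poleVec n
    rw [hmat_mulVec]
    have hdot : w ⬝ᵥ poleVec n = 0 := by
      unfold dotProduct poleVec
      rw [Finset.sum_congr rfl (fun i _ => show w i * (if (i:ℕ) = 0 then (1:ℝ) else 0) = 0 by
        by_cases h0 : (i:ℕ) = 0
        · have h1 : ¬((i:ℕ) = 1) := by omega
          simp [hw, h1]
        · simp [h0])]
      simp
    rw [hdot]
    simp
  have key := hf u hpole x
  rw [show ((u⁻¹ : Matrix.orthogonalGroup (Fin n) ℝ) : Matrix (Fin n) (Fin n) ℝ)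
    = hmat w from inv_coe_hmat w _] at key
  have hwx : w ⬝ᵥ x = x ⟨1, by omega⟩ := by
    unfold dotProduct
    rw [Finset.sum_congr rfl (fun i _ => show w i * x i =
      (if (i:ℕ) = 1 then x i else 0) by by_cases h : (i:ℕ) = 1 <;> simp [hw, h])]
    exact pick1 hn x
  have hmv : hmat w *ᵥ x = fun i : Fin n => if (i:ℕ) = 1 then -x i else x i := by
    rw [hmat_mulVec, hQ, hwx]
    funext i
    show x i - 2 / 1 * x ⟨1, by omega⟩ * w i = _
    by_cases h1 : (i:ℕ) = 1
    · have hii : i = ⟨1, by omega⟩ := Fin.val_injective (by simpa using h1)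
      rw [hii]
      simp [hw, h1]
      ring
    · simp [hw, h1]
  rw [hmv] at key
  exact key



noncomputable def qpoly (n : ℕ) : MvPolynomial (Fin n) ℂ :=
  ∑ i : Fin n, (if (i:ℕ) = 0 then 0 else X i ^ 2)



lemma pick0M {M : Type*} [AddCommMonoid M] (hn : 1 ≤ n) (g : Fin n → M) :
    ∑ i : Fin n, (if (i:ℕ) = 0 then g i else 0) = g ⟨0, by omega⟩ := by
  rw [Finset.sum_eq_single (⟨0, by omega⟩ : Fin n)]
  · simp
  · intro b _ hb
    rw [if_neg (fun h => hb (Fin.val_injective (by simpa using h)))]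
  · intro h; exact absurd (Finset.mem_univ _) h

lemma countM {M : Type*} [AddCommGroup M] (hn : 1 ≤ n) (c : M) :
    ∑ i : Fin n, (if (i:ℕ) = 0 then 0 else c) = (n-1) • c := by
  have h1 : ∀ i : Fin n, (if (i:ℕ) = 0 then (0:M) else c)
      = c - (if (i:ℕ) = 0 then c else 0) := by intro i; split <;> simp
  rw [Finset.sum_congr rfl (fun i _ => h1 i), Finset.sum_sub_distrib,
    pick0M hn (fun _ => c), Finset.sum_const, Finset.card_univ, Fintype.card_fin]
  have : n • c = (n-1) • c + c := by
    rw [← succ_nsmul]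
    congr 1
    omega
  rw [this]
  abel

lemma polyLaplacian_apply (p : MvPolynomial (Fin n) ℂ) :
    polyLaplacian n p = ∑ i : Fin n, pderiv i (pderiv i p) := by
  simp [polyLaplacian]

lemma pderiv_qpoly (i : Fin n) :
    pderiv i (qpoly n) = if (i:ℕ) = 0 then 0 else 2 * X i := by
  unfold qpoly
  rw [map_sum]
  by_cases h0 : (i:ℕ) = 0
  · rw [if_pos h0]
    apply Finset.sum_eq_zero
    intro t _
    by_cases ht : (t:ℕ) = 0
    · simp [ht]
    · rw [if_neg ht, pderiv_pow, pderiv_X_of_ne (fun he : t = i => ht (by rw [he, h0]))]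
      simp
  · rw [if_neg h0]
    rw [Finset.sum_eq_single i]
    · rw [if_neg h0, pderiv_pow, pderiv_X_self]
      ring
    · intro t _ ht
      by_cases ht0 : (t:ℕ) = 0
      · simp [ht0]
      · rw [if_neg ht0, pderiv_pow, pderiv_X_of_ne ht]
        simp
    · intro h; exact absurd (Finset.mem_univ _) h

lemma qpoly_homog : (qpoly n).IsHomogeneous 2 := by
  apply IsHomogeneous.sum
  intro i _
  split
  · exact isHomogeneous_zero _ _ _
  · exact isHomogeneous_X_pow _ _

lemma natCast_C (a : ℕ) : ((a : ℕ) : MvPolynomial (Fin n) ℂ) = C (a : ℂ) := by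
  simp

lemma lap_term (hn : 2 ≤ n) (i0 : Fin n) (hi0 : (i0:ℕ) = 0) (a j : ℕ) :
    polyLaplacian n (X i0 ^ a * qpoly n ^ j) =
      ((a*(a-1) : ℕ) : MvPolynomial (Fin n) ℂ) * (X i0 ^ (a-2) * qpoly n ^ j)
      + ((2*j*(2*j+n-3) : ℕ) : MvPolynomial (Fin n) ℂ) * (X i0 ^ a * qpoly n ^ (j-1)) := by
  set q : MvPolynomial (Fin n) ℂ := qpoly n with hq
  have hq0 : pderiv i0 q = 0 := by rw [hq, pderiv_qpoly, if_pos hi0]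
  have hDi0 : pderiv i0 (pderiv i0 (X i0 ^ a * q ^ j)) =
      ((a*(a-1) : ℕ) : MvPolynomial (Fin n) ℂ) * (X i0 ^ (a-2) * q ^ j) := by
    have h1 : pderiv i0 (X i0 ^ a * q ^ j) = ((a : ℕ) : MvPolynomial (Fin n) ℂ) *
        (X i0 ^ (a-1) * q ^ j) := by
      rw [pderiv_mul, pderiv_pow, pderiv_X_self, pderiv_pow, hq0]
      ring
    rw [h1, natCast_C, pderiv_C_mul, pderiv_mul, pderiv_pow, pderiv_X_self, pderiv_pow, hq0]
    simp only [← natCast_C]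
    rw [show a-1-1 = a-2 from by omega]
    push_cast
    ring
  have hDi : ∀ i : Fin n, (i:ℕ) ≠ 0 →
      pderiv i (pderiv i (X i0 ^ a * q ^ j)) =
        ((4*j*(j-1) : ℕ) : MvPolynomial (Fin n) ℂ) * (X i0 ^ a * (q ^ (j-2) * X i ^ 2))
        + ((2*j : ℕ) : MvPolynomial (Fin n) ℂ) * (X i0 ^ a * q ^ (j-1)) := by
    intro i hi
    have hne : i0 ≠ i := fun he => hi (by rw [← he, hi0])
    have hqi : pderiv i q = 2 * X i := by rw [hq, pderiv_qpoly, if_neg hi]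
    have h1 : pderiv i (X i0 ^ a * q ^ j) = ((2*j : ℕ) : MvPolynomial (Fin n) ℂ) *
        (X i0 ^ a * (q ^ (j-1) * X i)) := by
      rw [pderiv_mul, pderiv_pow, pderiv_X_of_ne hne, pderiv_pow, hqi]
      push_cast
      ring
    rw [h1, natCast_C, pderiv_C_mul, pderiv_mul, pderiv_pow, pderiv_X_of_ne hne,
      pderiv_mul, pderiv_pow, hqi, pderiv_X_self]
    simp only [← natCast_C]
    rw [show j-1-1 = j-2 from by omega]
    push_cast
    ring
  rw [polyLaplacian_apply]
  have hsplit : ∀ i : Fin n, pderiv i (pderiv i (X i0 ^ a * q ^ j)) =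
      (if (i:ℕ) = 0 then ((a*(a-1) : ℕ) : MvPolynomial (Fin n) ℂ) * (X i0 ^ (a-2) * q ^ j) else 0)
      + (((4*j*(j-1) : ℕ) : MvPolynomial (Fin n) ℂ) *
          (X i0 ^ a * (q ^ (j-2) * (if (i:ℕ) = 0 then 0 else X i ^ 2))))
      + (if (i:ℕ) = 0 then 0 else ((2*j : ℕ) : MvPolynomial (Fin n) ℂ) * (X i0 ^ a * q ^ (j-1))) := by
    intro i
    by_cases h : (i:ℕ) = 0
    · rw [if_pos h, if_pos h, if_pos h]
      have : i = i0 := Fin.val_injective (by rw [h, hi0])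
      rw [this]
      rw [hDi0]
      simp
    · rw [if_neg h, if_neg h, if_neg h, hDi i h]
      ring
  rw [Finset.sum_congr rfl (fun i _ => hsplit i), Finset.sum_add_distrib, Finset.sum_add_distrib]
  rw [pick0M (by omega) (fun _ => ((a*(a-1) : ℕ) : MvPolynomial (Fin n) ℂ) * (X i0 ^ (a-2) * q ^ j))]
  rw [countM (by omega)]
  have hS1 : ∑ i : Fin n, (((4*j*(j-1) : ℕ) : MvPolynomial (Fin n) ℂ) *
      (X i0 ^ a * (q ^ (j-2) * (if (i:ℕ) = 0 then 0 else X i ^ 2))))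
      = ((4*j*(j-1) : ℕ) : MvPolynomial (Fin n) ℂ) * (X i0 ^ a * (q ^ (j-2) * q)) := by
    rw [← Finset.mul_sum, ← Finset.mul_sum, ← Finset.mul_sum]
    rfl
  rw [hS1]
  rw [add_assoc]
  congr 1
  -- coefficient algebra
  rw [nsmul_eq_mul]
  obtain ⟨m, rfl⟩ : ∃ m, n = 2 + m := ⟨n - 2, by omega⟩
  clear hsplit hDi hDi0 hS1
  match j with
  | 0 => simp
  | 1 =>
    have h1 : (4*1*(1-1) : ℕ) = 0 := rfl
    have h2 : (2*1*(2*1+(2+m)-3) : ℕ) = 2*(m+1) := by omega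
    have h3 : (2+m-1 : ℕ) = m+1 := by omega
    rw [h1, h2, h3]
    push_cast
    ring
  | (j+2) =>
    rw [show (2*(j+2)+(2+m)-3 : ℕ) = 2*j+m+3 from by omega,
      show (2+m-1 : ℕ) = m+1 from by omega,
      show (j+2-1 : ℕ) = j+1 from rfl,
      show (j+2-2 : ℕ) = j from rfl,
      ← pow_succ]
    push_cast
    ring

section T5
variable {n : ℕ}

lemma pick1M {M : Type*} [AddCommMonoid M] (hn : 2 ≤ n) (g : Fin n → M) :
    ∑ i : Fin n, (if (i:ℕ) = 1 then g i else 0) = g ⟨1, by omega⟩ := by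
  rw [Finset.sum_eq_single (⟨1, by omega⟩ : Fin n)]
  · simp
  · intro b _ hb
    rw [if_neg (fun h => hb (Fin.val_injective (by simpa using h)))]
  · intro h; exact absurd (Finset.mem_univ _) h

lemma eval_qpoly (y : Fin n → ℂ) :
    eval y (qpoly n) = ∑ i : Fin n, (if (i:ℕ) = 0 then 0 else y i * y i) := by
  unfold qpoly
  rw [map_sum]
  exact Finset.sum_congr rfl fun i _ => by split <;> simp [sq]

lemma eval_form (c : ℕ → ℂ) (M : ℕ) (E : ℕ → ℕ) (i0 : Fin n) (y : Fin n → ℂ) :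
    eval y (∑ j ∈ Finset.range M, c j • (X i0 ^ E j * qpoly n ^ j)) =
      ∑ j ∈ Finset.range M, c j * (y i0) ^ E j * (eval y (qpoly n)) ^ j := by
  rw [map_sum]
  exact Finset.sum_congr rfl fun j _ => by
    rw [smul_eq_C_mul, eval_mul, eval_C, eval_mul, eval_pow, eval_X, eval_pow]
    ring

lemma sumq_real (hn : 2 ≤ n) (i0 : Fin n) (hi0 : (i0:ℕ) = 0) (z : Fin n → ℝ) :
    ∑ i : Fin n, (if (i:ℕ) = 0 then 0 else z i * z i)
      = (∑ i : Fin n, z i * z i) - z i0 * z i0 := by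
  have h1 : ∀ i : Fin n, (if (i:ℕ) = 0 then (0:ℝ) else z i * z i)
      = z i * z i - (if (i:ℕ) = 0 then z i * z i else 0) := by intro i; split <;> simp
  rw [Finset.sum_congr rfl (fun i _ => h1 i), Finset.sum_sub_distrib]
  congr 1
  rw [pick0M (by omega) (fun i => z i * z i)]
  have : (⟨0, by omega⟩ : Fin n) = i0 := Fin.val_injective (by simp [hi0])
  rw [this]

lemma orth_first_coord (hn : 2 ≤ n) (i0 : Fin n) (hi0 : (i0:ℕ) = 0)
    (u : Matrix.orthogonalGroup (Fin n) ℝ)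
    (hu : (u : Matrix (Fin n) (Fin n) ℝ) *ᵥ poleVec n = poleVec n) (x : Fin n → ℝ) :
    (star (u : Matrix (Fin n) (Fin n) ℝ) *ᵥ x) i0 = x i0 := by
  have hcol : ∀ t : Fin n, (u : Matrix (Fin n) (Fin n) ℝ) t i0 = poleVec n t := by
    intro t
    have := congrFun hu t
    rw [Matrix.mulVec, dotProduct] at this
    rw [← this]
    rw [Finset.sum_congr rfl (fun b _ => show (u : Matrix (Fin n) (Fin n) ℝ) t b * poleVec n b
      = (if (b:ℕ) = 0 then (u : Matrix (Fin n) (Fin n) ℝ) t b else 0) by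
        unfold poleVec; split <;> simp)]
    rw [pick0M (by omega) (fun b => (u : Matrix (Fin n) (Fin n) ℝ) t b)]
    exact congrArg (fun z => (u : Matrix (Fin n) (Fin n) ℝ) t z)
      (Fin.val_injective (show i0.val = ((⟨0, by omega⟩ : Fin n)).val by rw [hi0]))
  show ∑ t, star (u : Matrix (Fin n) (Fin n) ℝ) i0 t * x t = x i0
  rw [Finset.sum_congr rfl (fun t _ => show star (u : Matrix (Fin n) (Fin n) ℝ) i0 t * x t
    = (if (t:ℕ) = 0 then x t else 0) by
      rw [show star (u : Matrix (Fin n) (Fin n) ℝ) i0 t = (u : Matrix (Fin n) (Fin n) ℝ) t i0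
        from rfl, hcol t]
      unfold poleVec
      split <;> simp)]
  rw [pick0M (by omega) x]
  exact congrArg x (Fin.val_injective (show ((⟨0, by omega⟩ : Fin n)).val = i0.val by rw [hi0]))

lemma orth_norm (u : Matrix.orthogonalGroup (Fin n) ℝ) (x : Fin n → ℝ) :
    ∑ i : Fin n, (star (u : Matrix (Fin n) (Fin n) ℝ) *ᵥ x) i *
      (star (u : Matrix (Fin n) (Fin n) ℝ) *ᵥ x) i = ∑ i : Fin n, x i * x i := by
  have huu : (u : Matrix (Fin n) (Fin n) ℝ) * star (u : Matrix (Fin n) (Fin n) ℝ) = 1 :=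
    u.2.2
  set A := (u : Matrix (Fin n) (Fin n) ℝ)
  have key : (star A *ᵥ x) ⬝ᵥ (star A *ᵥ x) = x ⬝ᵥ x := by
    rw [Matrix.dotProduct_mulVec, show star A = Aᵀ from rfl, Matrix.vecMul_transpose,
      Matrix.mulVec_mulVec]
    rw [show A * Aᵀ = 1 from huu, Matrix.one_mulVec]
  exact key

lemma zonal_form (hn : 2 ≤ n) (i0 : Fin n) (hi0 : (i0:ℕ) = 0) (c : ℕ → ℂ) (M : ℕ)
    (E : ℕ → ℕ) :
    IsZonal n (∑ j ∈ Finset.range M, c j • (X i0 ^ E j * qpoly n ^ j)) := by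
  intro u hu x
  rw [Matrix.UnitaryGroup.inv_val]
  rw [eval_form, eval_form]
  set y : Fin n → ℝ := star (u : Matrix (Fin n) (Fin n) ℝ) *ᵥ x with hy
  have h0 : y i0 = x i0 := orth_first_coord hn i0 hi0 u hu x
  have hq : eval (fun i => ((y i : ℝ) : ℂ)) (qpoly n) =
      eval (fun i => ((x i : ℝ) : ℂ)) (qpoly n) := by
    rw [eval_qpoly, eval_qpoly]
    have hcast : ∀ z : Fin n → ℝ, ∑ i : Fin n, (if (i:ℕ) = 0 then 0 else (z i : ℂ) * (z i : ℂ))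
        = ((∑ i : Fin n, (if (i:ℕ) = 0 then 0 else z i * z i) : ℝ) : ℂ) := by
      intro z
      push_cast
      exact Finset.sum_congr rfl fun i _ => by split <;> simp
    rw [hcast y, hcast x, sumq_real hn i0 hi0 y, sumq_real hn i0 hi0 x, orth_norm u x, h0]
  exact Finset.sum_congr rfl fun j _ => by rw [hq, h0]

lemma homog_form (i0 : Fin n) (c : ℕ → ℂ) (k : ℕ) :
    (∑ j ∈ Finset.range (k/2+1), c j • (X i0 ^ (k - 2*j) * qpoly n ^ j)).IsHomogeneous k := by
  apply IsHomogeneous.sum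
  intro j hj
  have h2j : 2*j ≤ k := by
    have := Finset.mem_range.mp hj
    omega
  rw [smul_eq_C_mul]
  have : ((X i0 ^ (k - 2*j) * qpoly n ^ j : MvPolynomial (Fin n) ℂ)).IsHomogeneous k := by
    have h1 : ((X i0 ^ (k - 2*j) : MvPolynomial (Fin n) ℂ)).IsHomogeneous (k - 2*j) :=
      isHomogeneous_X_pow _ _
    have h2 : ((qpoly n ^ j : MvPolynomial (Fin n) ℂ)).IsHomogeneous (2*j) :=
      qpoly_homog (n := n) |>.pow j
    have := h1.mul h2
    rwa [Nat.sub_add_cancel h2j] at this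
  exact this.C_mul _
end T5
section T6
variable {n : ℕ}

noncomputable def zc (n k : ℕ) : ℕ → ℂ
  | 0 => 1
  | (j+1) => -((((k-2*j)*(k-2*j-1) : ℕ) : ℂ) / ((2*(j+1)*(2*(j+1)+n-3) : ℕ) : ℂ)) * zc n k j

lemma beta_ne (hn : 2 ≤ n) (j : ℕ) : ((2*(j+1)*(2*(j+1)+n-3) : ℕ) : ℂ) ≠ 0 := by
  rw [Nat.cast_ne_zero]
  apply Nat.mul_ne_zero <;> omega

lemma lap_form (hn : 2 ≤ n) (i0 : Fin n) (hi0 : (i0:ℕ) = 0) (c : ℕ → ℂ) (k : ℕ) :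
    polyLaplacian n (∑ j ∈ Finset.range (k/2+1), c j • (X i0 ^ (k - 2*j) * qpoly n ^ j)) =
      ∑ j ∈ Finset.range (k/2),
        (c j * (((k-2*j)*(k-2*j-1) : ℕ) : ℂ) + c (j+1) * ((2*(j+1)*(2*(j+1)+n-3) : ℕ) : ℂ)) •
          (X i0 ^ (k - 2*j - 2) * qpoly n ^ j) := by
  rw [map_sum]
  rw [Finset.sum_congr rfl (fun j _ => show polyLaplacian n (c j • (X i0 ^ (k - 2*j) * qpoly n ^ j))
    = c j • ((((k-2*j)*((k-2*j)-1) : ℕ) : MvPolynomial (Fin n) ℂ) * (X i0 ^ ((k-2*j)-2) * qpoly n ^ j))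
      + c j • (((2*j*(2*j+n-3) : ℕ) : MvPolynomial (Fin n) ℂ) * (X i0 ^ (k-2*j) * qpoly n ^ (j-1)))
    by rw [map_smul, lap_term hn i0 hi0, smul_add])]
  rw [Finset.sum_add_distrib]
  have hA : ∑ j ∈ Finset.range (k/2+1), c j •
      ((((k-2*j)*((k-2*j)-1) : ℕ) : MvPolynomial (Fin n) ℂ) * (X i0 ^ ((k-2*j)-2) * qpoly n ^ j))
      = ∑ j ∈ Finset.range (k/2), c j •
      ((((k-2*j)*((k-2*j)-1) : ℕ) : MvPolynomial (Fin n) ℂ) * (X i0 ^ ((k-2*j)-2) * qpoly n ^ j)) := by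
    rw [Finset.sum_range_succ]
    have h0 : ((k-2*(k/2))*((k-2*(k/2))-1) : ℕ) = 0 := by
      have : k - 2*(k/2) = 0 ∨ (k-2*(k/2)) - 1 = 0 := by omega
      rcases this with h | h <;> rw [h] <;> simp
    rw [h0]
    simp
  have hB : ∑ j ∈ Finset.range (k/2+1), c j •
      (((2*j*(2*j+n-3) : ℕ) : MvPolynomial (Fin n) ℂ) * (X i0 ^ (k-2*j) * qpoly n ^ (j-1)))
      = ∑ j ∈ Finset.range (k/2), c (j+1) •
      (((2*(j+1)*(2*(j+1)+n-3) : ℕ) : MvPolynomial (Fin n) ℂ) * (X i0 ^ ((k-2*j)-2) * qpoly n ^ j)) := by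
    rw [Finset.sum_range_succ']
    have h0 : ((2*0*(2*0+n-3) : ℕ) : MvPolynomial (Fin n) ℂ) = 0 := by norm_num
    rw [h0]
    simp only [zero_mul, smul_zero, add_zero]
    exact Finset.sum_congr rfl fun j _ => by
      rw [show k - 2*(j+1) = (k - 2*j) - 2 from by omega, show j+1-1 = j from rfl]
  rw [hA, hB, ← Finset.sum_add_distrib]
  exact Finset.sum_congr rfl fun j _ => by
    rw [smul_eq_C_mul, smul_eq_C_mul, smul_eq_C_mul, natCast_C, natCast_C, map_add, map_mul,
      map_mul]
    ring

lemma zc_rec (hn : 2 ≤ n) (k j : ℕ) :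
    zc n k j * (((k-2*j)*(k-2*j-1) : ℕ) : ℂ)
      + zc n k (j+1) * ((2*(j+1)*(2*(j+1)+n-3) : ℕ) : ℂ) = 0 := by
  have hb := beta_ne hn (n := n) j
  have h : zc n k (j+1) * ((2*(j+1)*(2*(j+1)+n-3) : ℕ) : ℂ)
      = -((((k-2*j)*(k-2*j-1) : ℕ) : ℂ)) * zc n k j := by
    rw [show zc n k (j+1) =
      -((((k-2*j)*(k-2*j-1) : ℕ) : ℂ) / ((2*(j+1)*(2*(j+1)+n-3) : ℕ) : ℂ)) * zc n k j from rfl,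
      mul_right_comm, neg_mul, neg_mul, div_mul_cancel₀ _ hb, neg_mul]
  rw [h]
  ring

lemma rec_scale (hn : 2 ≤ n) (k : ℕ) (e : ℕ → ℂ)
    (hrec : ∀ j < k/2, e j * (((k-2*j)*(k-2*j-1) : ℕ) : ℂ)
      + e (j+1) * ((2*(j+1)*(2*(j+1)+n-3) : ℕ) : ℂ) = 0) :
    ∀ j ≤ k/2, e j = e 0 * zc n k j := by
  intro j
  induction j with
  | zero => intro _; rw [show zc n k 0 = 1 from rfl, mul_one]
  | succ j ih =>
    intro hj
    have hjlt : j < k/2 := by omega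
    have h1 := hrec j hjlt
    have h2 := zc_rec hn (n := n) k j
    have hb := beta_ne hn (n := n) j
    have hej := ih (by omega)
    apply mul_right_cancel₀ hb
    rw [show e (j+1) * ((2*(j+1)*(2*(j+1)+n-3) : ℕ) : ℂ)
      = -(e j * (((k-2*j)*(k-2*j-1) : ℕ) : ℂ)) from by linear_combination h1]
    rw [hej]
    linear_combination (-(e 0)) * h2

lemma eval_pole_form (hn : 2 ≤ n) (i0 : Fin n) (hi0 : (i0:ℕ) = 0) (c : ℕ → ℂ) (M : ℕ)
    (hM : 0 < M) (E : ℕ → ℕ) :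
    eval (fun i : Fin n => if (i:ℕ) = 0 then 1 else 0)
      (∑ j ∈ Finset.range M, c j • (X i0 ^ E j * qpoly n ^ j)) = c 0 := by
  rw [eval_form]
  have hq : eval (fun i : Fin n => if (i:ℕ) = 0 then (1:ℂ) else 0) (qpoly n) = 0 := by
    rw [eval_qpoly]
    apply Finset.sum_eq_zero
    intro i _
    by_cases h : (i:ℕ) = 0 <;> simp [h]
  rw [hq]
  simp only [hi0, eq_self_iff_true, if_true]
  rw [Finset.sum_eq_single 0]
  · rw [pow_zero, one_pow]
    ring
  · intro j _ hjne
    rw [zero_pow hjne]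
    ring
  · intro h
    exact absurd (Finset.mem_range.mpr hM) h

end T6
section T7
variable {n : ℕ}

noncomputable def g2 (n : ℕ) : Fin n → MvPolynomial (Fin 2) ℂ :=
  fun i => if (i:ℕ) = 0 then X 0 else if (i:ℕ) = 1 then X 1 else 0

noncomputable def pmap {n : ℕ} (f : MvPolynomial (Fin n) ℂ) : MvPolynomial (Fin 2) ℂ :=
  aeval (g2 n) f

lemma aeval_eq_eval {m : ℕ} (y : Fin m → ℂ) (p : MvPolynomial (Fin m) ℂ) :
    aeval y p = eval y p := rfl

lemma eval_pmap (z : Fin 2 → ℂ) (f : MvPolynomial (Fin n) ℂ) :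
    eval z (pmap f) =
      eval (fun i : Fin n => if (i:ℕ) = 0 then z 0 else if (i:ℕ) = 1 then z 1 else 0) f := by
  unfold pmap
  rw [← _root_.aeval_eq_eval z, comp_aeval_apply, _root_.aeval_eq_eval]
  refine congrArg (fun y => eval y f) (funext fun i => ?_)
  unfold g2
  by_cases h0 : (i:ℕ) = 0
  · simp [h0]
  · by_cases h1 : (i:ℕ) = 1 <;> simp [h0, h1]

lemma pmap_qpoly (hn : 2 ≤ n) : pmap (qpoly n) = X 1 ^ 2 := by
  unfold pmap qpoly
  rw [map_sum]
  refine Eq.trans (Finset.sum_congr rfl fun i _ => ?_) (pick1M hn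
    (fun _ => (X 1 ^ 2 : MvPolynomial (Fin 2) ℂ)))
  by_cases h0 : (i:ℕ) = 0
  · have h1 : ¬((i:ℕ) = 1) := by omega
    simp [h0, h1]
  · by_cases h1 : (i:ℕ) = 1 <;> simp [h0, h1, g2]

lemma pmap_form (hn : 2 ≤ n) (i0 : Fin n) (hi0 : (i0:ℕ) = 0) (c : ℕ → ℂ) (M : ℕ) (E : ℕ → ℕ) :
    pmap (∑ j ∈ Finset.range M, c j • (X i0 ^ E j * qpoly n ^ j)) =
      ∑ j ∈ Finset.range M, c j • ((X 0 : MvPolynomial (Fin 2) ℂ) ^ E j * X 1 ^ (2*j)) := by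
  unfold pmap
  rw [map_sum]
  refine Finset.sum_congr rfl fun j _ => ?_
  rw [map_smul, map_mul, map_pow, map_pow, aeval_X]
  rw [show g2 n i0 = X 0 from by unfold g2; rw [if_pos hi0]]
  rw [show aeval (g2 n) (qpoly n) = X 1 ^ 2 from pmap_qpoly hn, ← pow_mul]

lemma zonal_pf_eval (hn : 2 ≤ n) {f : MvPolynomial (Fin n) ℂ} (hf : IsZonal n f)
    (x : Fin n → ℝ) :
    eval (fun i => (x i : ℂ)) f =
      eval (fun j : Fin 2 => if (j:ℕ) = 0 then ((x ⟨0, by omega⟩ : ℝ) : ℂ)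
        else ((tailNorm x : ℝ) : ℂ)) (pmap f) := by
  rw [zonal_collapse hn hf x, eval_pmap]
  refine congrArg (fun y => eval y f) (funext fun i => ?_)
  by_cases h0 : (i:ℕ) = 0
  · simp [h0]
  · by_cases h1 : (i:ℕ) = 1 <;> simp [h0, h1]

lemma zonal_pf_even (hn : 2 ≤ n) {f : MvPolynomial (Fin n) ℂ} (hf : IsZonal n f) :
    aeval (fun j : Fin 2 => if (j:ℕ) = 1 then -X 1 else X j) (pmap f) = pmap f := by
  rw [← sub_eq_zero]
  apply eval_real_zero
  intro z
  rw [map_sub, sub_eq_zero]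
  rw [← _root_.aeval_eq_eval (fun j => ((z j : ℝ) : ℂ)), comp_aeval_apply, _root_.aeval_eq_eval]
  rw [eval_pmap, eval_pmap]
  set xz : Fin n → ℝ := fun i => if (i:ℕ) = 0 then z 0 else if (i:ℕ) = 1 then z 1 else 0 with hxz
  refine Eq.trans ?_ (Eq.trans (zonal_reflect hn hf xz) ?_)
  · refine congrArg (fun y => eval y f) (funext fun i => ?_)
    by_cases h0 : (i:ℕ) = 0
    · have h1 : ¬((i:ℕ) = 1) := by omega
      simp [h0, h1, hxz]
    · by_cases h1 : (i:ℕ) = 1 <;> simp [h0, h1, hxz]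
  · refine congrArg (fun y => eval y f) (funext fun i => ?_)
    by_cases h0 : (i:ℕ) = 0
    · simp [h0, hxz]
    · by_cases h1 : (i:ℕ) = 1 <;> simp [h0, h1, hxz]

end T7
section T8
variable {n : ℕ}

lemma sum_univ_eq_degree {m : ℕ} (w : Fin m →₀ ℕ) :
    ∑ i : Fin m, w i = Finsupp.degree w := by
  rw [Finsupp.degree_apply]
  rw [Finset.sum_subset (Finset.subset_univ w.support)]
  intro i _ hi
  exact Finsupp.notMem_support_iff.mp hi

lemma degree_two (w : Fin 2 →₀ ℕ) : Finsupp.degree w = w 0 + w 1 := by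
  rw [← sum_univ_eq_degree, Fin.sum_univ_two]

lemma fin2_eq (w v : Fin 2 →₀ ℕ) (h0 : w 0 = v 0) (h1 : w 1 = v 1) : w = v := by
  ext i
  have : i = 0 ∨ i = 1 := by
    rcases i with ⟨iv, hiv⟩
    interval_cases iv
    · left; rfl
    · right; rfl
  rcases this with h | h <;> rw [h] <;> assumption

lemma wj_apply_0 (a b : ℕ) :
    (Finsupp.single (0 : Fin 2) a + Finsupp.single (1 : Fin 2) b) 0 = a := by
  rw [Finsupp.add_apply, Finsupp.single_apply, Finsupp.single_apply]
  norm_num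

lemma wj_apply_1 (a b : ℕ) :
    (Finsupp.single (0 : Fin 2) a + Finsupp.single (1 : Fin 2) b) 1 = b := by
  rw [Finsupp.add_apply, Finsupp.single_apply, Finsupp.single_apply]
  norm_num

lemma coeff_negsub (p : MvPolynomial (Fin 2) ℂ) (w : Fin 2 →₀ ℕ) :
    coeff w (aeval (fun j : Fin 2 => if (j:ℕ) = 1 then -X 1 else X j) p)
      = (-1:ℂ)^(w 1) * coeff w p := by
  set N : Fin 2 → MvPolynomial (Fin 2) ℂ := fun j => if (j:ℕ) = 1 then -X 1 else X j with hN
  have hmono : ∀ (w' : Fin 2 →₀ ℕ) (a : ℂ),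
      aeval N (monomial w' a) = (-1:ℂ)^(w' 1) • monomial w' a := by
    intro w' a
    rw [aeval_monomial, Finsupp.prod_fintype _ _ (fun i => pow_zero _), Fin.prod_univ_two]
    have hN0 : N 0 = X 0 := by simp [hN]
    have hN1 : N 1 = -X 1 := by simp [hN]
    rw [hN0, hN1, neg_pow]
    rw [monomial_eq, Finsupp.prod_fintype _ _ (fun i => pow_zero _), Fin.prod_univ_two]
    rw [show (algebraMap ℂ (MvPolynomial (Fin 2) ℂ)) a = C a from rfl]
    rw [smul_eq_C_mul, map_pow]
    rw [show (C (-1:ℂ) : MvPolynomial (Fin 2) ℂ) = -1 from by simp]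
    ring
  conv_lhs => rw [p.as_sum, map_sum]
  rw [Finset.sum_congr rfl (fun w' _ => hmono w' _)]
  rw [coeff_sum]
  rw [Finset.sum_congr rfl (fun w' _ => by
    rw [coeff_smul, coeff_monomial, smul_eq_mul])]
  rw [Finset.sum_congr rfl (fun w' (_ : w' ∈ p.support) => show
      (-1:ℂ)^(w' 1) * (if w' = w then coeff w' p else 0)
        = (if w' = w then (-1:ℂ)^(w' 1) * coeff w' p else 0) by split <;> simp)]
  rw [Finset.sum_ite_eq' p.support w (fun w' => (-1:ℂ)^(w' 1) * coeff w' p)]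
  by_cases hw : w ∈ p.support
  · rw [if_pos hw]
  · rw [if_neg hw, MvPolynomial.notMem_support_iff.mp hw, mul_zero]

lemma even_coeff_zero {p : MvPolynomial (Fin 2) ℂ}
    (hev : aeval (fun j : Fin 2 => if (j:ℕ) = 1 then -X 1 else X j) p = p)
    (w : Fin 2 →₀ ℕ) (hodd : Odd (w 1)) : coeff w p = 0 := by
  have h := coeff_negsub p w
  rw [hev] at h
  rw [Odd.neg_one_pow hodd] at h
  have h2 : (2:ℂ) * coeff w p = 0 := by linear_combination h
  have := mul_eq_zero.mp h2
  simpa using this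

lemma rep_even_homog (k : ℕ) {p : MvPolynomial (Fin 2) ℂ} (hk : p.IsHomogeneous k)
    (hev : aeval (fun j : Fin 2 => if (j:ℕ) = 1 then -X 1 else X j) p = p) :
    p = ∑ j ∈ Finset.range (k/2+1),
      coeff (Finsupp.single 0 (k-2*j) + Finsupp.single 1 (2*j)) p •
        ((X 0 : MvPolynomial (Fin 2) ℂ) ^ (k-2*j) * X 1 ^ (2*j)) := by
  apply MvPolynomial.ext
  intro w
  have hrhs : ∀ j : ℕ, coeff w
      (coeff (Finsupp.single 0 (k-2*j) + Finsupp.single 1 (2*j)) p •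
        ((X 0 : MvPolynomial (Fin 2) ℂ) ^ (k-2*j) * X 1 ^ (2*j)))
      = (if Finsupp.single 0 (k-2*j) + Finsupp.single (1 : Fin 2) (2*j) = w then
          coeff (Finsupp.single 0 (k-2*j) + Finsupp.single 1 (2*j)) p else 0) := by
    intro j
    rw [coeff_smul, X_pow_eq_monomial, X_pow_eq_monomial, monomial_mul, one_mul,
      coeff_monomial, smul_eq_mul]
    split <;> simp
  rw [coeff_sum, Finset.sum_congr rfl (fun j _ => hrhs j)]
  by_cases hdeg : w 0 + w 1 = k
  · by_cases hodd : Odd (w 1)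
    · rw [even_coeff_zero hev w hodd]
      rw [Finset.sum_eq_zero]
      intro j _
      rw [if_neg]
      intro hc
      have := congrArg (fun v : Fin 2 →₀ ℕ => v 1) hc
      simp only [wj_apply_1] at this
      exact (Nat.not_even_iff_odd.mpr hodd) (this ▸ even_two_mul j)
    · have heven : Even (w 1) := Nat.not_odd_iff_even.mp hodd
      obtain ⟨j0, hj0⟩ := heven
      have hj0' : w 1 = 2 * j0 := by omega
      have hj0r : j0 ∈ Finset.range (k/2+1) := Finset.mem_range.mpr (by omega)
      rw [Finset.sum_eq_single j0]
      · rw [if_pos (fin2_eq _ _ (by rw [wj_apply_0]; omega) (by rw [wj_apply_1]; omega))]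
        congr 1
        exact fin2_eq _ _ (by rw [wj_apply_0]; omega) (by rw [wj_apply_1]; omega)
      · intro j _ hjne
        rw [if_neg]
        intro hc
        have := congrArg (fun v : Fin 2 →₀ ℕ => v 1) hc
        simp only [wj_apply_1] at this
        omega
      · intro hc
        exact absurd hj0r hc
  · rw [hk.coeff_eq_zero (by rw [degree_two]; exact hdeg)]
    rw [Finset.sum_eq_zero]
    intro j hj
    rw [if_neg]
    intro hc
    have h0 := congrArg (fun v : Fin 2 →₀ ℕ => v 0) hc
    have h1 := congrArg (fun v : Fin 2 →₀ ℕ => v 1) hc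
    simp only [wj_apply_0, wj_apply_1] at h0 h1
    have := Finset.mem_range.mp hj
    omega

lemma pmap_homog {f : MvPolynomial (Fin n) ℂ} {k : ℕ} (hf : f.IsHomogeneous k) :
    (pmap f).IsHomogeneous k := by
  unfold pmap
  conv_lhs => rw [f.as_sum]
  rw [map_sum]
  apply IsHomogeneous.sum
  intro w hw
  rw [aeval_monomial]
  have hdeg : ∑ i : Fin n, w i = k := by
    rw [sum_univ_eq_degree]
    rw [Finsupp.degree_eq_weight_one]
    exact hf (MvPolynomial.mem_support_iff.mp hw)
  have hprod : ((Finsupp.prod w fun i e => g2 n i ^ e)).IsHomogeneous k := by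
    rw [Finsupp.prod_fintype _ _ (fun i => pow_zero _)]
    rw [← hdeg]
    apply IsHomogeneous.prod
    intro i _
    unfold g2
    by_cases h0 : (i:ℕ) = 0
    · rw [if_pos h0]; exact isHomogeneous_X_pow _ _
    · by_cases h1 : (i:ℕ) = 1
      · rw [if_neg h0, if_pos h1]; exact isHomogeneous_X_pow _ _
      · rw [if_neg h0, if_neg h1]
        rcases Nat.eq_zero_or_pos (w i) with h | h
        · rw [h, pow_zero]
          exact isHomogeneous_one _ _
        · rw [zero_pow (by omega)]
          exact isHomogeneous_zero _ _ _
  rw [show (algebraMap ℂ (MvPolynomial (Fin 2) ℂ)) (coeff w f) = C (coeff w f) from rfl]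
  exact hprod.C_mul _

end T8


end AUX

/-- the subspace of zonal functions with pole `e = (1,0,…,0)` inside
`Harm_k` is exactly one-dimensional. -/
theorem harm_zonal_one_dimensional (n k : ℕ) (hn : 2 ≤ n) :
    ∃ f₀ : MvPolynomial (Fin n) ℂ,
      f₀ ∈ harmSubmodule n k ∧ IsZonal n f₀ ∧ f₀ ≠ 0 ∧
      ∀ f ∈ harmSubmodule n k, IsZonal n f → ∃ c : ℂ, f = c • f₀ := by
  have i0 : Fin n := ⟨0, by omega⟩
  clear i0
  set i0 : Fin n := ⟨0, by omega⟩ with hi0def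
  have hi0 : (i0:ℕ) = 0 := rfl
  set f₀ : MvPolynomial (Fin n) ℂ :=
    ∑ j ∈ Finset.range (k/2+1), zc n k j • (X i0 ^ (k - 2*j) * qpoly n ^ j) with hf₀
  refine ⟨f₀, ?_, ?_, ?_, ?_⟩
  · rw [harmSubmodule, Submodule.mem_inf]
    constructor
    · rw [mem_homogeneousSubmodule]
      exact homog_form i0 (zc n k) k
    · rw [LinearMap.mem_ker, hf₀, lap_form hn i0 hi0]
      apply Finset.sum_eq_zero
      intro j _
      rw [zc_rec hn k j, zero_smul]
  · exact zonal_form hn i0 hi0 _ _ _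
  · intro hc
    have h1 : eval (fun i : Fin n => if (i:ℕ) = 0 then 1 else 0) f₀ = zc n k 0 :=
      eval_pole_form hn i0 hi0 (zc n k) (k/2+1) (by omega) (fun j => k - 2*j)
    rw [hc] at h1
    rw [show zc n k 0 = 1 from rfl] at h1
    simp at h1
  · intro f hf hzf
    rw [harmSubmodule, Submodule.mem_inf] at hf
    have hfhom : f.IsHomogeneous k := (mem_homogeneousSubmodule _ _).mp hf.1
    have hflap : polyLaplacian n f = 0 := LinearMap.mem_ker.mp hf.2
    have hpfh := pmap_homog hfhom
    have hpev := zonal_pf_even hn hzf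
    have hrep := rep_even_homog k hpfh hpev
    set e : ℕ → ℂ :=
      fun j => coeff (Finsupp.single 0 (k-2*j) + Finsupp.single 1 (2*j)) (pmap f) with he
    set F : MvPolynomial (Fin n) ℂ :=
      ∑ j ∈ Finset.range (k/2+1), e j • (X i0 ^ (k - 2*j) * qpoly n ^ j) with hF
    have hpF : pmap F = pmap f := by
      rw [hF, pmap_form hn i0 hi0]
      exact hrep.symm
    have hFzonal : IsZonal n F := zonal_form hn i0 hi0 _ _ _
    have hfF : f = F := by
      rw [← sub_eq_zero]
      apply eval_real_zero
      intro x
      rw [map_sub, sub_eq_zero, zonal_pf_eval hn hzf x, zonal_pf_eval hn hFzonal x, hpF]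
    have hlapF : polyLaplacian n F = 0 := by rw [← hfF]; exact hflap
    rw [hF, lap_form hn i0 hi0] at hlapF
    have h2 : ∑ j ∈ Finset.range (k/2),
        (e j * (((k-2*j)*(k-2*j-1) : ℕ) : ℂ) + e (j+1) * ((2*(j+1)*(2*(j+1)+n-3) : ℕ) : ℂ)) •
          ((X 0 : MvPolynomial (Fin 2) ℂ) ^ (k - 2*j - 2) * X 1 ^ (2*j)) = 0 := by
      have := congrArg pmap hlapF
      rwa [pmap_form hn i0 hi0 _ (k/2) (fun j => k - 2*j - 2),
        show pmap (0 : MvPolynomial (Fin n) ℂ) = 0 from map_zero _] at this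
    have hcoeffs : ∀ j < k/2, e j * (((k-2*j)*(k-2*j-1) : ℕ) : ℂ)
        + e (j+1) * ((2*(j+1)*(2*(j+1)+n-3) : ℕ) : ℂ) = 0 := by
      intro t ht
      have h3 := congrArg (coeff (Finsupp.single 0 (k-2*t-2) + Finsupp.single 1 (2*t))) h2
      rw [coeff_sum] at h3
      rw [Finset.sum_congr rfl (fun j _ => show coeff _ _ = _ from by
        rw [coeff_smul, X_pow_eq_monomial, X_pow_eq_monomial, monomial_mul, one_mul,
          coeff_monomial, smul_eq_mul])] at h3
      rw [Finset.sum_congr rfl (fun j (hj : j ∈ Finset.range (k/2)) => show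
          (e j * (((k-2*j)*(k-2*j-1) : ℕ) : ℂ) + e (j+1) * ((2*(j+1)*(2*(j+1)+n-3) : ℕ) : ℂ)) *
            (if Finsupp.single (0 : Fin 2) (k-2*j-2) + Finsupp.single (1 : Fin 2) (2*j) =
              Finsupp.single 0 (k-2*t-2) + Finsupp.single 1 (2*t) then (1:ℂ) else 0)
          = (if j = t then (e j * (((k-2*j)*(k-2*j-1) : ℕ) : ℂ)
              + e (j+1) * ((2*(j+1)*(2*(j+1)+n-3) : ℕ) : ℂ)) else 0) from by
        by_cases hjt : j = t
        · rw [if_pos hjt, hjt, if_pos rfl, mul_one]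
        · rw [if_neg hjt, if_neg, mul_zero]
          intro hcon
          have := congrArg (fun v : Fin 2 →₀ ℕ => v 1) hcon
          simp only [wj_apply_1] at this
          omega)] at h3
      rw [Finset.sum_ite_eq' (Finset.range (k/2)) t, if_pos (Finset.mem_range.mpr ht)] at h3
      rw [show coeff (Finsupp.single (0 : Fin 2) (k-2*t-2) + Finsupp.single 1 (2*t))
        (0 : MvPolynomial (Fin 2) ℂ) = 0 from rfl] at h3
      exact h3
    have hscale := rec_scale hn k e hcoeffs
    refine ⟨e 0, ?_⟩
    rw [hfF, hF, hf₀, Finset.smul_sum]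
    apply Finset.sum_congr rfl
    intro j hj
    rw [hscale j (Nat.lt_succ_iff.mp (Finset.mem_range.mp hj)), mul_smul]
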